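/- (Bregman projection.) Let V ⊆ ℝ be an open interval, G : V → ℝ strictly convex and differentiable with derivative g = G′, and f the inverse of g. Fix N ∈ ℕ and for i = 1,…,N let δ_i ∈ {0,1}, q_i > 0, z_i ∈ ℝ^d, and initial weights ω_i^{(0)} ∈ V. Let C = {ω : Σ_{i=1}^N δ_i ω_i z_i = Σ_{i=1}^N z_i}, and suppose ω̂ ∈ C has the dual form ω̂_i = f(g(ω_i^{(0)}) + q_i λ̂ᵀ z_i) for some λ̂ ∈ ℝ^d. Then D̃_G(ω‖ω^{(0)}) ≥ D̃_G(ω̂‖ω^{(0)}) for every ω ∈ C with entries in V on {i : δ_i = 1}, with equality if and only if ω_i = ω̂_i for every i with δ_i = 1; hence ω̂ is the unique minimizer of the weighted total Bregman divergence from ω^{(0)} over C. -/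
import Mathlib


open Matrix Finset

/-- Strict tangent line inequality: Bregman divergence is positive for distinct points. -/
lemma bregman_pos {V : Set ℝ} {G g : ℝ → ℝ} (hconv : StrictConvexOn ℝ V G)
    (hderiv : ∀ ω ∈ V, HasDerivAt G (g ω) ω) {a b : ℝ} (ha : a ∈ V) (hb : b ∈ V)
    (hab : a ≠ b) : 0 < G a - G b - g b * (a - b) := by
  rcases lt_or_gt_of_ne hab with h | h
  · -- a < b : slope G a b < g b
    have := hconv.slope_lt_of_hasDerivAt ha hb h (hderiv b hb)
    rw [slope_def_field, div_lt_iff₀ (by linarith)] at this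
    nlinarith
  · -- b < a : g b < slope G b a
    have := hconv.lt_slope_of_hasDerivAt hb ha h (hderiv b hb)
    rw [slope_def_field, lt_div_iff₀ (by linarith)] at this
    nlinarith

lemma bregman_nonneg {V : Set ℝ} {G g : ℝ → ℝ} (hconv : StrictConvexOn ℝ V G)
    (hderiv : ∀ ω ∈ V, HasDerivAt G (g ω) ω) {a b : ℝ} (ha : a ∈ V) (hb : b ∈ V) :
    0 ≤ G a - G b - g b * (a - b) := by
  rcases eq_or_ne a b with rfl | hab
  · simp
  · exact (bregman_pos hconv hderiv ha hb hab).le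

/-- Bregman projection: the dual-form calibrated weights `ω̂` uniquely minimize
the weighted total Bregman divergence from the initial weights `ω⁰` over the
calibration constraint set `C`. -/
theorem stmt_9 (N d : ℕ) (V : Set ℝ) (hVopen : IsOpen V) (hVconn : V.OrdConnected)
    (G g f : ℝ → ℝ) (hconv : StrictConvexOn ℝ V G)
    (hderiv : ∀ ω ∈ V, HasDerivAt G (g ω) ω)
    (hfinv : ∀ ω ∈ V, f (g ω) = ω)
    (δ q ω0 : Fin N → ℝ) (hδ : ∀ i, δ i = 0 ∨ δ i = 1) (hq : ∀ i, 0 < q i)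
    (hω0 : ∀ i, ω0 i ∈ V)
    (z : Fin N → Fin d → ℝ)
    (D : ℝ → ℝ → ℝ) (hD : ∀ a b, D a b = G a - G b - g b * (a - b))
    (Dt : (Fin N → ℝ) → (Fin N → ℝ) → ℝ)
    (hDt : ∀ ω ω' : Fin N → ℝ, Dt ω ω' = ∑ i, δ i * (q i)⁻¹ * D (ω i) (ω' i))
    (lam : Fin d → ℝ)
    (hrange : ∀ i, δ i = 1 → ∃ ω ∈ V, g ω = g (ω0 i) + q i * (lam ⬝ᵥ z i))
    (ωhat : Fin N → ℝ)
    (hdual : ∀ i, δ i = 1 → ωhat i = f (g (ω0 i) + q i * (lam ⬝ᵥ z i)))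
    (hcal : ∑ i, (δ i * ωhat i) • z i = ∑ i, z i) :
    ∀ ω : Fin N → ℝ, (∀ i, δ i = 1 → ω i ∈ V) →
      (∑ i, (δ i * ω i) • z i = ∑ i, z i) →
      (Dt ω ω0 ≥ Dt ωhat ω0 ∧
       (Dt ω ω0 = Dt ωhat ω0 ↔ ∀ i, δ i = 1 → ω i = ωhat i)) := by
  intro ω hωV hωcal
  -- properties of ωhat on the active set
  have hhat : ∀ i, δ i = 1 → ωhat i ∈ V ∧ g (ωhat i) = g (ω0 i) + q i * (lam ⬝ᵥ z i) := by
    intro i hi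
    obtain ⟨w, hwV, hgw⟩ := hrange i hi
    have : ωhat i = w := by rw [hdual i hi, ← hgw, hfinv w hwV]
    exact this ▸ ⟨hwV, hgw⟩
  -- the linear term vanishes by the two calibration constraints
  have hsum : ∑ i, δ i * (ω i - ωhat i) * (lam ⬝ᵥ z i) = 0 := by
    have hv : ∀ j, (∑ i, δ i * ω i * z i j) = ∑ i, δ i * ωhat i * z i j := by
      intro j
      have h1 := congrFun (hωcal.trans hcal.symm) j
      simpa [Finset.sum_apply, mul_assoc] using h1
    have step : ∑ i, δ i * (ω i - ωhat i) * (lam ⬝ᵥ z i)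
        = ∑ i, ∑ j, lam j * (δ i * ω i * z i j - δ i * ωhat i * z i j) := by
      refine Finset.sum_congr rfl fun i _ => ?_
      rw [dotProduct, Finset.mul_sum]
      refine Finset.sum_congr rfl fun j _ => ?_
      ring
    rw [step, Finset.sum_comm]
    refine Finset.sum_eq_zero fun j _ => ?_
    rw [← Finset.mul_sum, Finset.sum_sub_distrib, hv j, sub_self, mul_zero]
  -- key identity : difference of divergences is a sum of divergences to ωhat
  have hkey : Dt ω ω0 - Dt ωhat ω0 = ∑ i, δ i * (q i)⁻¹ * D (ω i) (ωhat i) := by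
    rw [hDt, hDt, ← Finset.sum_sub_distrib]
    have : ∀ i ∈ Finset.univ (α := Fin N),
        δ i * (q i)⁻¹ * D (ω i) (ω0 i) - δ i * (q i)⁻¹ * D (ωhat i) (ω0 i)
        = δ i * (q i)⁻¹ * D (ω i) (ωhat i) + δ i * (ω i - ωhat i) * (lam ⬝ᵥ z i) := by
      intro i _
      rcases hδ i with h0 | h1
      · simp [h0]
      · obtain ⟨hhV, hg⟩ := hhat i h1
        rw [hD, hD, hD, h1, hg]
        have hqne : q i ≠ 0 := (hq i).ne'
        field_simp
        ring
    rw [Finset.sum_congr rfl this, Finset.sum_add_distrib, hsum, add_zero]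
  -- each term is nonnegative
  have hterm : ∀ i ∈ Finset.univ (α := Fin N), 0 ≤ δ i * (q i)⁻¹ * D (ω i) (ωhat i) := by
    intro i _
    rcases hδ i with h0 | h1
    · simp [h0]
    · rw [h1, hD, one_mul]
      exact mul_nonneg (inv_nonneg.2 (hq i).le)
        (bregman_nonneg hconv hderiv (hωV i h1) (hhat i h1).1)
  have hge : 0 ≤ ∑ i, δ i * (q i)⁻¹ * D (ω i) (ωhat i) := Finset.sum_nonneg hterm
  constructor
  · linarith [hkey]
  · constructor
    · intro heq i hi
      have hzero : ∑ i, δ i * (q i)⁻¹ * D (ω i) (ωhat i) = 0 := by linarith [hkey]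
      have := (Finset.sum_eq_zero_iff_of_nonneg hterm).1 hzero i (Finset.mem_univ i)
      by_contra hne
      have hpos : 0 < δ i * (q i)⁻¹ * D (ω i) (ωhat i) := by
        rw [hi, hD, one_mul]
        exact mul_pos (inv_pos.2 (hq i))
          (bregman_pos hconv hderiv (hωV i hi) (hhat i hi).1 hne)
      linarith
    · intro hall
      have : ∑ i, δ i * (q i)⁻¹ * D (ω i) (ωhat i) = 0 := by
        apply Finset.sum_eq_zero
        intro i _
        rcases hδ i with h0 | h1
        · simp [h0]
        · rw [hall i h1, hD]; simp
      linarith [hkey]
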